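/- Let d ≥ 2 and 1/d < f ≤ 1. The maximum of μ₁ subject to the constraints μ₁ ≥ ν ≥ 0, f = (1/d)(√μ₁ + (d-1)√ν)², and μ₁ + (d-1)ν ≤ 1, is attained when μ₁ + (d-1)ν = 1, and equals μ₁ = 1 - f + (-1 + 2(f + √((d-1)(1-f)f)))/d. -/

import Mathlib

set_option maxHeartbeats 1600000 in
theorem kyfan_convex_roof_optimization (d : ℕ) (hd : 2 ≤ d) (f : ℝ)
    (hf1 : 1 / (d : ℝ) < f) (hf2 : f ≤ 1) :
    IsGreatest {μ1 : ℝ | ∃ ν : ℝ, 0 ≤ ν ∧ ν ≤ μ1 ∧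
        f = (1 / (d : ℝ)) * (Real.sqrt μ1 + ((d : ℝ) - 1) * Real.sqrt ν) ^ 2 ∧
        μ1 + ((d : ℝ) - 1) * ν ≤ 1}
      (1 - f + (-1 + 2 * (f + Real.sqrt (((d : ℝ) - 1) * (1 - f) * f))) / (d : ℝ)) ∧
    (∃ ν : ℝ, 0 ≤ ν ∧
      ν ≤ (1 - f + (-1 + 2 * (f + Real.sqrt (((d : ℝ) - 1) * (1 - f) * f))) / (d : ℝ)) ∧
      f = (1 / (d : ℝ)) *
        (Real.sqrt (1 - f + (-1 + 2 * (f + Real.sqrt (((d : ℝ) - 1) * (1 - f) * f))) / (d : ℝ))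
          + ((d : ℝ) - 1) * Real.sqrt ν) ^ 2 ∧
      (1 - f + (-1 + 2 * (f + Real.sqrt (((d : ℝ) - 1) * (1 - f) * f))) / (d : ℝ))
        + ((d : ℝ) - 1) * ν = 1) := by
  have hD2 : (2:ℝ) ≤ (d:ℝ) := by exact_mod_cast hd
  set D : ℝ := (d:ℝ) with hDdef
  have hD0 : (0:ℝ) < D := by linarith
  have hD1 : (1:ℝ) ≤ D - 1 := by linarith
  have hf0 : 0 < f := lt_trans (by positivity) hf1
  have hf1' : (0:ℝ) ≤ 1 - f := by linarith
  have hDf : 1 < D * f := by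
    rw [div_lt_iff₀ hD0] at hf1; linarith [hf1]
  set sf := Real.sqrt f with hsfdef
  set s1 := Real.sqrt (1 - f) with hs1def
  set sd := Real.sqrt D with hsddef
  set se := Real.sqrt (D - 1) with hsedef
  have hsf2 : sf ^ 2 = f := Real.sq_sqrt hf0.le
  have hs12 : s1 ^ 2 = 1 - f := Real.sq_sqrt hf1'
  have hsd2 : sd ^ 2 = D := Real.sq_sqrt hD0.le
  have hse2 : se ^ 2 = D - 1 := Real.sq_sqrt (by linarith)
  have hsf0 : 0 ≤ sf := Real.sqrt_nonneg _
  have hs10 : 0 ≤ s1 := Real.sqrt_nonneg _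
  have hsd0 : 0 < sd := Real.sqrt_pos.mpr hD0
  have hse0 : 0 < se := Real.sqrt_pos.mpr (by linarith)
  have hR : Real.sqrt ((D - 1) * (1 - f) * f) = se * s1 * sf := by
    rw [Real.sqrt_mul (by positivity), Real.sqrt_mul (by linarith)]
  set a : ℝ := (sf + se * s1) / sd with hadef
  set b : ℝ := (se * sf - s1) / (sd * se) with hbdef
  have ha0 : 0 ≤ a := by positivity
  have hb0 : 0 ≤ b := by
    apply div_nonneg _ (by positivity)
    have : s1 ≤ se * sf := by
      rw [hs1def, hsedef, hsfdef, ← Real.sqrt_mul (by linarith)]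
      exact Real.sqrt_le_sqrt (by linarith only [hDf])
    linarith
  set μ : ℝ := 1 - f + (-1 + 2 * (f + Real.sqrt ((D - 1) * (1 - f) * f))) / D with hμdef
  have expand : a ^ 2 = (f + (D - 1) * (1 - f) + 2 * (se * s1 * sf)) / D := by
    rw [hadef, div_pow, hsd2]
    congr 1
    linear_combination hsf2 + s1 ^ 2 * hse2 + (D - 1) * hs12
  have hμa : μ = a ^ 2 := by
    rw [hμdef, hR, expand]
    field_simp
    ring
  have expandb : b ^ 2 = ((D - 1) * f + (1 - f) - 2 * (se * s1 * sf)) / (D * (D - 1)) := by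
    rw [hbdef, div_pow, mul_pow, hsd2, hse2]
    congr 1
    linear_combination sf ^ 2 * hse2 + (D - 1) * hsf2 + hs12
  set ν : ℝ := (1 - μ) / (D - 1) with hνdef
  have hνb : ν = b ^ 2 := by
    rw [hνdef, hμa, expand, expandb]
    field_simp
    ring
  have hν0 : 0 ≤ ν := by rw [hνb]; positivity
  have hba : b ≤ a := by
    have hab : a - b = (s1 * (se ^ 2 + 1)) / (sd * se) := by
      rw [hadef, hbdef]; field_simp; ring
    have : 0 ≤ a - b := by rw [hab]; positivity
    linarith
  have hνμ : ν ≤ μ := by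
    rw [hνb, hμa]; exact pow_le_pow_left₀ hb0 hba 2
  have hsum : μ + (D - 1) * ν = 1 := by
    rw [hνdef]; field_simp; ring
  have hsqμ : Real.sqrt μ = a := by rw [hμa]; exact Real.sqrt_sq ha0
  have hsqν : Real.sqrt ν = b := by rw [hνb]; exact Real.sqrt_sq hb0
  have hab2 : a + (D - 1) * b = sf * sd := by
    rw [hadef, hbdef]
    field_simp
    linear_combination s1 * hse2 - se * sf * hsd2
  have hfeq : f = (1 / D) * (Real.sqrt μ + (D - 1) * Real.sqrt ν) ^ 2 := by
    rw [hsqμ, hsqν, hab2, mul_pow, hsf2, hsd2]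
    field_simp
  clear_value sf s1 sd se a b μ ν
  constructor
  · constructor
    · exact ⟨ν, hν0, hνμ, hfeq, hsum.le⟩
    · rintro μ1 ⟨ν1, hν10, hν1μ1, hfeq1, hle1⟩
      have hμ10 : 0 ≤ μ1 := le_trans hν10 hν1μ1
      set x := Real.sqrt μ1 with hxdef
      set y := Real.sqrt ν1 with hydef
      have hx2 : x ^ 2 = μ1 := Real.sq_sqrt hμ10
      have hy2 : y ^ 2 = ν1 := Real.sq_sqrt hν10
      have hx0 : 0 ≤ x := Real.sqrt_nonneg _
      have hy0 : 0 ≤ y := Real.sqrt_nonneg _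
      clear_value x y
      have h1 : (x + (D - 1) * y) ^ 2 = D * f := by
        rw [hfeq1]; field_simp
      have hs : x + (D - 1) * y = sd * sf := by
        have hnn : 0 ≤ x + (D - 1) * y :=
          add_nonneg hx0 (mul_nonneg (by linarith) hy0)
        calc x + (D - 1) * y = Real.sqrt ((x + (D - 1) * y) ^ 2) :=
              (Real.sqrt_sq hnn).symm
          _ = Real.sqrt (D * f) := by rw [h1]
          _ = sd * sf := by rw [Real.sqrt_mul hD0.le f, ← hsddef, ← hsfdef]
      have hle' : x ^ 2 + (D - 1) * y ^ 2 ≤ 1 := by rw [hx2, hy2]; exact hle1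
      have h3 : (D - 1) * (x ^ 2 + (D - 1) * y ^ 2) ≤ (D - 1) := by
        have h := mul_le_mul_of_nonneg_left hle' (show (0:ℝ) ≤ D - 1 by linarith)
        linarith
      have h4 : (D - 1) * y = sd * sf - x := by linarith [hs]
      have h5 : (D - 1) ^ 2 * y ^ 2 = (sd * sf - x) ^ 2 := by rw [← h4]; ring
      have h6 : (D - 1) * x ^ 2 + (sd * sf - x) ^ 2 ≤ D - 1 := by
        have h3' : (D - 1) * x ^ 2 + (D - 1) ^ 2 * y ^ 2 ≤ D - 1 := by linarith only [h3]
        linarith only [h3', h5]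
      have e1 : sd ^ 2 * x ^ 2 = D * x ^ 2 := by rw [hsd2]
      have e2 : sd ^ 2 * sf ^ 2 = D * f := by rw [hsd2, hsf2]
      have e3 : se ^ 2 * s1 ^ 2 = (D - 1) * (1 - f) := by rw [hse2, hs12]
      have hq : (sd * x - sf) ^ 2 ≤ (se * s1) ^ 2 := by
        linarith only [h6, e1, e2, e3, hsf2]
      have h7 : sd * x - sf ≤ se * s1 := by
        have h8 : Real.sqrt ((sd * x - sf) ^ 2) ≤ Real.sqrt ((se * s1) ^ 2) :=
          Real.sqrt_le_sqrt hq
        rw [Real.sqrt_sq_eq_abs, Real.sqrt_sq (mul_nonneg hse0.le hs10)] at h8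
        exact le_trans (le_abs_self _) h8
      have hxa : x ≤ a := by
        rw [hadef, le_div_iff₀ hsd0]
        linarith only [h7]
      calc μ1 = x ^ 2 := hx2.symm
        _ ≤ a ^ 2 := pow_le_pow_left₀ hx0 hxa 2
        _ = μ := hμa.symm
  · exact ⟨ν, hν0, hνμ, hfeq, hsum⟩
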